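/- Let G be a finite simple graph on vertex set {1,…,n} such that 1,2,…,n is a perfect elimination ordering of G (for every i, the set { j > i : {i,j} ∈ E(G) } is a clique of G), and let I = I(G^c). Then for every generator x_i x_j ∈ G(I) with i < j, the colon ideal ( v ∈ G(I) : v >_lex x_i x_j ) : x_i x_j equals the ideal generated by the variables x_l with l ∈ {1,2,…,i−1} ∪ { k : i < k < j and {i,k} ∉ E(G) }; in particular set(x_i x_j) = {1,…,i−1} ∪ { k : i < k < j, {i,k} ∉ E(G) }. -/

import Mathlib

open MvPolynomial

/-- if `1, 2, …, n` is a perfect elimination ordering of `G` and `I = I(G^c)`, then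
for every generator `x_i x_j` of `I` (`i < j`, `{i,j} ∉ E(G)`) the colon ideal of the lex-earlier
generators by `x_i x_j` equals the ideal generated by the variables `x_l` with
`l ∈ {1,…,i−1} ∪ { k : i < k < j, {i,k} ∉ E(G) }`; in particular this set is `set(x_i x_j)`. -/
theorem stmt_9 {K : Type*} [Field K] {n : ℕ} (G : SimpleGraph (Fin n))
    (peo : ∀ i j k : Fin n, i < j → i < k → G.Adj i j → G.Adj i k → j ≠ k → G.Adj j k) :
    ∀ i j : Fin n, i < j → ¬ G.Adj i j →
      Submodule.colon
        (Ideal.span {p : MvPolynomial (Fin n) K | ∃ k l : Fin n, k < l ∧ ¬ G.Adj k l ∧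
          (k < i ∨ (k = i ∧ l < j)) ∧
          p = monomial (Finsupp.single k 1 + Finsupp.single l 1) 1})
        (Ideal.span {(monomial (Finsupp.single i 1 + Finsupp.single j 1) (1 : K))})
      = Ideal.span {q : MvPolynomial (Fin n) K | ∃ l : Fin n,
          (l < i ∨ (i < l ∧ l < j ∧ ¬ G.Adj i l)) ∧ q = MvPolynomial.X l} := by
  intro i j hij hAdj
  set a : Fin n →₀ ℕ := Finsupp.single i 1 + Finsupp.single j 1 with ha
  have hL : {p : MvPolynomial (Fin n) K | ∃ k l : Fin n, k < l ∧ ¬ G.Adj k l ∧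
        (k < i ∨ (k = i ∧ l < j)) ∧
        p = monomial (Finsupp.single k 1 + Finsupp.single l 1) 1}
      = (fun s => monomial s (1 : K)) '' {s : Fin n →₀ ℕ | ∃ k l : Fin n, k < l ∧ ¬ G.Adj k l ∧
        (k < i ∨ (k = i ∧ l < j)) ∧ s = Finsupp.single k 1 + Finsupp.single l 1} := by
    ext p
    constructor
    · rintro ⟨k, l, h1, h2, h3, rfl⟩
      exact ⟨_, ⟨k, l, h1, h2, h3, rfl⟩, rfl⟩
    · rintro ⟨s, ⟨k, l, h1, h2, h3, rfl⟩, rfl⟩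
      exact ⟨k, l, h1, h2, h3, rfl⟩
  have hR : {q : MvPolynomial (Fin n) K | ∃ l : Fin n,
        (l < i ∨ (i < l ∧ l < j ∧ ¬ G.Adj i l)) ∧ q = MvPolynomial.X l}
      = MvPolynomial.X '' {l : Fin n | l < i ∨ (i < l ∧ l < j ∧ ¬ G.Adj i l)} := by
    ext q
    constructor
    · rintro ⟨l, h, rfl⟩; exact ⟨l, h, rfl⟩
    · rintro ⟨l, h, rfl⟩; exact ⟨l, h, rfl⟩
  rw [hL, hR]
  ext f
  nth_rewrite 2 [← Ideal.submodule_span_eq]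
  rw [Submodule.mem_colon_span_singleton, smul_eq_mul, mem_ideal_span_monomial_image,
    mem_ideal_span_X_image]
  constructor
  · -- f * x_i x_j ∈ I_<  →  every monomial of f uses a variable from the set
    intro h c hc
    have hmem : c + a ∈ (f * monomial a (1 : K)).support := by
      rw [mem_support_iff, coeff_mul_monomial, mul_one]
      exact mem_support_iff.mp hc
    obtain ⟨s, ⟨k, l, hkl, hadj, hcond, rfl⟩, hle⟩ := h _ hmem
    rcases hcond with hk | ⟨hkeq, hlj⟩
    · -- k < i : the variable is x_k
      refine ⟨k, Or.inl hk, ?_⟩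
      have h1 := Finsupp.le_def.mp hle k
      have hki : i ≠ k := fun hh => hk.ne hh.symm
      have hkj : j ≠ k := fun hh => (hk.trans hij).ne hh.symm
      simp only [ha, Finsupp.add_apply, Finsupp.single_eq_same,
        Finsupp.single_eq_of_ne' hkl.ne', Finsupp.single_eq_of_ne' hki,
        Finsupp.single_eq_of_ne' hkj] at h1
      omega
    · -- k = i, l < j : the variable is x_l
      have hil : i < l := hkeq ▸ hkl
      refine ⟨l, Or.inr ⟨hil, hlj, hkeq ▸ hadj⟩, ?_⟩
      have h1 := Finsupp.le_def.mp hle l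
      have hli : i ≠ l := hil.ne
      have hlj' : j ≠ l := fun hh => hlj.ne hh.symm
      simp only [ha, Finsupp.add_apply, Finsupp.single_eq_same,
        Finsupp.single_eq_of_ne' hkl.ne, Finsupp.single_eq_of_ne' hli,
        Finsupp.single_eq_of_ne' hlj'] at h1
      omega
  · -- converse
    intro h d hd
    rw [mem_support_iff, coeff_mul_monomial'] at hd
    split_ifs at hd with hda
    · have hc : d - a ∈ f.support := by
        rw [mem_support_iff]
        intro hh
        exact hd (by rw [hh, zero_mul])
      set c : Fin n →₀ ℕ := d - a with hcdef
      have hdca : d = c + a := (tsub_add_cancel_of_le hda).symm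
      obtain ⟨t, ht, htne⟩ := h _ hc
      have hst : Finsupp.single t 1 ≤ c :=
        Finsupp.single_le_iff.mpr (Nat.one_le_iff_ne_zero.mpr htne)
      rcases ht with hti | ⟨hit, htj, hadjt⟩
      · by_cases hadjti : G.Adj t i
        · -- then ¬ Adj t j, use generator x_t x_j
          have hadjtj : ¬ G.Adj t j := fun hh =>
            hAdj (peo t i j hti (hti.trans hij) hadjti hh hij.ne)
          refine ⟨Finsupp.single t 1 + Finsupp.single j 1,
            ⟨t, j, hti.trans hij, hadjtj, Or.inl hti, rfl⟩, ?_⟩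
          rw [hdca, ha]
          exact add_le_add hst (le_add_self)
        · -- use generator x_t x_i
          refine ⟨Finsupp.single t 1 + Finsupp.single i 1,
            ⟨t, i, hti, hadjti, Or.inl hti, rfl⟩, ?_⟩
          rw [hdca, ha]
          exact add_le_add hst (le_self_add)
      · -- use generator x_i x_t
        refine ⟨Finsupp.single i 1 + Finsupp.single t 1,
          ⟨i, t, hit, hadjt, Or.inr ⟨rfl, htj⟩, rfl⟩, ?_⟩
        rw [hdca, ha, add_comm (Finsupp.single i 1) (Finsupp.single t 1)]
        exact add_le_add hst (le_self_add)
    · exact absurd rfl hd
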